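/- Let F be a field, W a faithful finite-dimensional representation of a finite group G, H ≤ G a proper subgroup with [G:H] invertible in F, and f_1,…,f_m homogeneous elements of F[W]^G of positive degree. Let A = F[f_1,…,f_m] and 𝒥 the ideal generated by f_1,…,f_m in F[W]^H. Let R = (1/[G:H])·Tr_H^G : F[W]^H → F[W]^G be the relative Reynolds operator. Suppose Δ ∪ {1} is a homogeneous generating set of F[W]^H as an A-module with δ ∉ A for each δ ∈ Δ. If R(δ) ∈ 𝒥 for all δ ∈ Δ, then F[W]^G = A. -/

import Mathlib

open MvPolynomial

/-- Relative Reynolds operator criterion (Lemma 3.1): let `G` be a finite group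
acting faithfully and degree-preservingly on `F[W] = F[x₁,…,xₙ]` by `F`-algebra
automorphisms, `H ≤ G` a proper subgroup with index invertible in `F`, and
`f₁,…,f_m` homogeneous `G`-invariants of positive degree, `A = F[f₁,…,f_m]` and
`𝒥` the ideal they generate in `F[W]^H`.  If `Δ ∪ {1}` is a homogeneous
generating set of `F[W]^H` as an `A`-module with `δ ∉ A` for all `δ ∈ Δ`, and the
Reynolds operator `R = [G:H]⁻¹·Tr_H^G` sends every `δ ∈ Δ` into `𝒥`, then
`F[W]^G = A`. -/
theorem reynolds_criterion (F : Type*) [Field F] (n : ℕ)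
    (G : Type*) [Group G] [Fintype G] [DecidableEq G]
    (ρ : G →* (MvPolynomial (Fin n) F ≃ₐ[F] MvPolynomial (Fin n) F))
    (hfaithful : Function.Injective ρ)
    (hdeg : ∀ (g : G) (d : ℕ) (f : MvPolynomial (Fin n) F),
      f.IsHomogeneous d → (ρ g f).IsHomogeneous d)
    (H : Subgroup G) [DecidablePred (· ∈ H)] (hproper : H ≠ ⊤)
    (hindex : (H.index : F) ≠ 0)
    (invG invH : Subalgebra F (MvPolynomial (Fin n) F))
    (hinvG : ∀ f, f ∈ invG ↔ ∀ g : G, ρ g f = f)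
    (hinvH : ∀ f, f ∈ invH ↔ ∀ g ∈ H, ρ g f = f)
    (m : ℕ) (f : Fin m → MvPolynomial (Fin n) F)
    (hfG : ∀ i, f i ∈ invG)
    (hfhom : ∀ i, ∃ d : ℕ, 0 < d ∧ (f i).IsHomogeneous d)
    (A : Subalgebra F (MvPolynomial (Fin n) F))
    (hA : A = Algebra.adjoin F (Set.range f))
    (R : MvPolynomial (Fin n) F → MvPolynomial (Fin n) F)
    (hR : ∀ p, R p = (H.index : F)⁻¹ • ∑ c : G ⧸ H, ρ (Quotient.out c) p)
    (Δ : Set (MvPolynomial (Fin n) F))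
    (hΔH : ∀ δ ∈ Δ, δ ∈ invH)
    (hΔhom : ∀ δ ∈ Δ, ∃ d : ℕ, δ.IsHomogeneous d)
    (hΔnotA : ∀ δ ∈ Δ, δ ∉ A)
    (hgen : ∀ p ∈ invH, p ∈ Submodule.span A (insert 1 Δ))
    (hRΔ : ∀ δ ∈ Δ, R δ ∈ Submodule.span invH (Set.range f)) :
    invG = A := by
  classical
  -- basic inclusions
  have hAinv : A ≤ invG := by
    rw [hA]
    exact Algebra.adjoin_le (by rintro x ⟨i, rfl⟩; exact hfG i)
  have hGH : invG ≤ invH := fun p hp => (hinvH p).2 fun g _ => (hinvG p).1 hp g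
  have hfA : ∀ j, f j ∈ A := fun j => hA ▸ Algebra.subset_adjoin ⟨j, rfl⟩
  have hcardF : ((Fintype.card (G ⧸ H) : ℕ) : F) ≠ 0 := by
    rwa [← Nat.card_eq_fintype_card, ← Subgroup.index_eq_card]
  -- R fixes invG pointwise
  have Rfix : ∀ p ∈ invG, R p = p := by
    intro p hp
    rw [hR]
    have hsum : ∑ c : G ⧸ H, ρ (Quotient.out c) p = ∑ _c : G ⧸ H, p :=
      Finset.sum_congr rfl fun c _ => (hinvG p).1 hp (Quotient.out c)
    rw [hsum, Finset.sum_const, Finset.card_univ, ← Nat.cast_smul_eq_nsmul F, smul_smul]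
    rw [show ((H.index : F))⁻¹ * ((Fintype.card (G ⧸ H) : ℕ) : F) = 1 by
      rw [← Nat.card_eq_fintype_card, ← Subgroup.index_eq_card]
      exact inv_mul_cancel₀ hindex]
    exact one_smul _ _
  -- R is additive
  have Radd : ∀ p q, R (p + q) = R p + R q := by
    intro p q
    simp only [hR, map_add, Finset.sum_add_distrib, smul_add]
  have R0 : R 0 = 0 := by simp [hR]
  have Rsum : ∀ (s : Finset (Fin m)) (t : Fin m → MvPolynomial (Fin n) F),
      R (∑ j ∈ s, t j) = ∑ j ∈ s, R (t j) := by
    intro s t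
    induction s using Finset.induction_on with
    | empty => simpa using R0
    | insert _ _ h ih => rw [Finset.sum_insert h, Finset.sum_insert h, Radd, ih]
  -- R is linear over invariants
  have RmulL : ∀ q ∈ invG, ∀ p, R (q * p) = q * R p := by
    intro q hq p
    have hsum : ∑ c : G ⧸ H, ρ (Quotient.out c) (q * p)
        = q * ∑ c : G ⧸ H, ρ (Quotient.out c) p := by
      rw [Finset.mul_sum]
      exact Finset.sum_congr rfl fun c _ => by rw [map_mul, (hinvG q).1 hq]
    rw [hR, hR, hsum, mul_smul_comm]
  have RmulR : ∀ q ∈ invG, ∀ p, R (p * q) = R p * q := by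
    intro q hq p
    have hsum : ∑ c : G ⧸ H, ρ (Quotient.out c) (p * q)
        = (∑ c : G ⧸ H, ρ (Quotient.out c) p) * q := by
      rw [Finset.sum_mul]
      exact Finset.sum_congr rfl fun c _ => by rw [map_mul, (hinvG q).1 hq]
    rw [hR, hR, hsum, smul_mul_assoc]
  -- the transfer maps H-invariants to G-invariants
  have Rtrans : ∀ p ∈ invH, R p ∈ invG := by
    intro p hp
    rw [hinvG]
    intro g
    rw [hR, map_smul, map_sum]
    have key : ∀ c : G ⧸ H, ρ g (ρ (Quotient.out c) p) = ρ (Quotient.out (g • c)) p := by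
      intro c
      have hmem : (Quotient.out (g • c))⁻¹ * (g * Quotient.out c) ∈ H := by
        apply QuotientGroup.eq.1
        rw [QuotientGroup.out_eq']
        conv_lhs => rw [← QuotientGroup.out_eq' c]
        rfl
      have hfac : g * Quotient.out c
          = Quotient.out (g • c) * ((Quotient.out (g • c))⁻¹ * (g * Quotient.out c)) := by
        group
      calc ρ g (ρ (Quotient.out c) p) = ρ (g * Quotient.out c) p := by rw [map_mul]; rfl
        _ = ρ (Quotient.out (g • c))
              (ρ ((Quotient.out (g • c))⁻¹ * (g * Quotient.out c)) p) := by
            conv_lhs => rw [hfac]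
            rw [map_mul]; rfl
        _ = ρ (Quotient.out (g • c)) p := by rw [(hinvH p).1 hp _ hmem]
    have hsum : ∑ c : G ⧸ H, ρ g (ρ (Quotient.out c) p)
        = ∑ c : G ⧸ H, ρ (Quotient.out c) p := by
      have h1 : ∑ c : G ⧸ H, ρ g (ρ (Quotient.out c) p)
          = ∑ c : G ⧸ H, ρ (Quotient.out (g • c)) p :=
        Finset.sum_congr rfl fun c _ => key c
      exact h1.trans (Finset.sum_equiv (MulAction.toPerm g)
        (fun i => by simp) (fun i _ => rfl))
    rw [hsum]
  -- elements of the relative ideal map into combinations with invariant coefficients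
  have RJ : ∀ x ∈ Submodule.span invH (Set.range f),
      ∃ w : Fin m → MvPolynomial (Fin n) F, (∀ j, w j ∈ invG) ∧ R x = ∑ j, w j * f j := by
    intro x hx
    obtain ⟨c, hc⟩ := (Submodule.mem_span_range_iff_exists_fun _).1 hx
    refine ⟨fun j => R ((c j : MvPolynomial (Fin n) F)), fun j => Rtrans _ (c j).2, ?_⟩
    rw [← hc, Rsum]
    refine Finset.sum_congr rfl fun j _ => ?_
    rw [Subalgebra.smul_def, smul_eq_mul, RmulR _ (hfG j)]
  -- R sends the span of Δ over A into such combinations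
  have hSz : ∀ z ∈ Submodule.span A Δ,
      ∃ w : Fin m → MvPolynomial (Fin n) F, (∀ j, w j ∈ invG) ∧ R z = ∑ j, w j * f j := by
    intro z hz
    induction hz using Submodule.span_induction with
    | mem δ hδ =>
      obtain ⟨w, hw, hRR⟩ := RJ _ (hRΔ δ hδ)
      exact ⟨w, hw, by rw [← Rfix _ (Rtrans δ (hΔH δ hδ)), hRR]⟩
    | zero => exact ⟨0, fun _ => invG.zero_mem, by simp [R0]⟩
    | add x y hx hy ihx ihy =>
      obtain ⟨w1, hw1, h1⟩ := ihx
      obtain ⟨w2, hw2, h2⟩ := ihy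
      refine ⟨w1 + w2, fun j => add_mem (hw1 j) (hw2 j), ?_⟩
      rw [Radd, h1, h2, ← Finset.sum_add_distrib]
      exact Finset.sum_congr rfl fun j _ => (add_mul _ _ _).symm
    | smul b x hx ihx =>
      obtain ⟨w, hw, h1⟩ := ihx
      refine ⟨fun j => (b : MvPolynomial (Fin n) F) * w j,
        fun j => mul_mem (hAinv b.2) (hw j), ?_⟩
      rw [Subalgebra.smul_def, smul_eq_mul, RmulL _ (hAinv b.2), h1, Finset.mul_sum]
      exact Finset.sum_congr rfl fun j _ => (mul_assoc _ _ _).symm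
  -- decomposition of G-invariants
  have decomp : ∀ p ∈ invG, ∃ a ∈ A, ∃ w : Fin m → MvPolynomial (Fin n) F,
      (∀ j, w j ∈ invG) ∧ p = a + ∑ j, w j * f j := by
    intro p hp
    obtain ⟨a, z, hz, hpz⟩ := Submodule.mem_span_insert.1 (hgen p (hGH hp))
    obtain ⟨w, hw, hRz⟩ := hSz z hz
    have ha1 : (a • (1 : MvPolynomial (Fin n) F)) = (a : MvPolynomial (Fin n) F) := by
      rw [Subalgebra.smul_def, smul_eq_mul, mul_one]
    refine ⟨(a : MvPolynomial (Fin n) F), a.2, w, hw, ?_⟩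
    calc p = R p := (Rfix p hp).symm
      _ = R (a • 1) + R z := by rw [hpz, Radd]
      _ = (a : MvPolynomial (Fin n) F) + ∑ j, w j * f j := by
          rw [ha1, Rfix _ (hAinv a.2), hRz]
  -- homogeneous components of G-invariants are G-invariant
  have hcinv : ∀ p ∈ invG, ∀ d, homogeneousComponent d p ∈ invG := by
    intro p hp d
    rw [hinvG]
    intro g
    have hps : p = ∑ i ∈ Finset.range (p.totalDegree + 1), ρ g (homogeneousComponent i p) := by
      conv_lhs => rw [← (hinvG p).1 hp g, ← sum_homogeneousComponent p]
      rw [map_sum]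
    have heach : ∀ i, homogeneousComponent d (ρ g (homogeneousComponent i p))
        = if d = i then ρ g (homogeneousComponent i p) else 0 := fun i =>
      homogeneousComponent_of_mem ((mem_homogeneousSubmodule _ _).2
        (hdeg g i _ (homogeneousComponent_isHomogeneous i p)))
    have h3 : homogeneousComponent d p
        = if d ∈ Finset.range (p.totalDegree + 1)
            then ρ g (homogeneousComponent d p) else 0 := by
      calc homogeneousComponent d p
          = homogeneousComponent d (∑ i ∈ Finset.range (p.totalDegree + 1),
              ρ g (homogeneousComponent i p)) := by rw [← hps]
        _ = ∑ i ∈ Finset.range (p.totalDegree + 1),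
              if d = i then ρ g (homogeneousComponent i p) else 0 := by
            rw [map_sum]; exact Finset.sum_congr rfl fun i _ => heach i
        _ = _ := Finset.sum_ite_eq _ _ _
    by_cases hd : d ∈ Finset.range (p.totalDegree + 1)
    · rw [if_pos hd] at h3
      exact h3.symm
    · rw [if_neg hd] at h3
      simp [h3]
  -- homogeneous components of elements of A lie in A
  have hAcomp : ∀ a ∈ A, ∀ d, homogeneousComponent d a ∈ A := by
    intro a ha d
    have hmono : ∀ x ∈ Submonoid.closure (Set.range f),
        (∃ e, MvPolynomial.IsHomogeneous x e) ∧ x ∈ A := by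
      intro x hx
      induction hx using Submonoid.closure_induction with
      | mem y hy =>
        obtain ⟨i, rfl⟩ := hy
        obtain ⟨di, _, hdi⟩ := hfhom i
        exact ⟨⟨di, hdi⟩, hfA i⟩
      | one => exact ⟨⟨0, isHomogeneous_one _ _⟩, A.one_mem⟩
      | mul x y hx hy ihx ihy =>
        obtain ⟨⟨e1, h1⟩, hx'⟩ := ihx
        obtain ⟨⟨e2, h2⟩, hy'⟩ := ihy
        exact ⟨⟨e1 + e2, h1.mul h2⟩, A.mul_mem hx' hy'⟩
    have ha' : a ∈ Submodule.span F ((Submonoid.closure (Set.range f) : Submonoid _) :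
        Set (MvPolynomial (Fin n) F)) := by
      rw [← Algebra.adjoin_eq_span, Subalgebra.mem_toSubmodule, ← hA]
      exact ha
    clear ha
    induction ha' using Submodule.span_induction with
    | mem x hx =>
      obtain ⟨⟨e, he⟩, hxA⟩ := hmono x hx
      rw [homogeneousComponent_of_mem ((mem_homogeneousSubmodule _ _).2 he)]
      split
      · exact hxA
      · exact A.zero_mem
    | zero => rw [map_zero]; exact A.zero_mem
    | add x y _ _ ihx ihy => rw [map_add]; exact A.add_mem ihx ihy
    | smul c x _ ihx => rw [map_smul]; exact A.smul_mem ihx c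
  -- components of a product with a homogeneous polynomial
  have hmulcomp : ∀ (w v : MvPolynomial (Fin n) F) (dj : ℕ), v.IsHomogeneous dj → ∀ d : ℕ,
      (dj ≤ d → homogeneousComponent d (w * v) = homogeneousComponent (d - dj) w * v) ∧
      (d < dj → homogeneousComponent d (w * v) = 0) := by
    intro w v dj hv d
    have hwv : w * v = ∑ i ∈ Finset.range (w.totalDegree + 1),
        homogeneousComponent i w * v := by
      rw [← Finset.sum_mul, sum_homogeneousComponent]
    have heach : ∀ i, homogeneousComponent d (homogeneousComponent i w * v)
        = if d = i + dj then homogeneousComponent i w * v else 0 := fun i =>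
      homogeneousComponent_of_mem ((mem_homogeneousSubmodule _ _).2
        ((homogeneousComponent_isHomogeneous i w).mul hv))
    have hsum : homogeneousComponent d (w * v)
        = ∑ i ∈ Finset.range (w.totalDegree + 1),
            if d = i + dj then homogeneousComponent i w * v else 0 := by
      rw [hwv, map_sum]
      exact Finset.sum_congr rfl fun i _ => heach i
    constructor
    · intro hle
      have hcong : ∀ i ∈ Finset.range (w.totalDegree + 1),
          (if d = i + dj then homogeneousComponent i w * v else 0)
          = if d - dj = i then homogeneousComponent i w * v else 0 := fun i _ => by
        simp only [show (d = i + dj) ↔ (d - dj = i) from by omega]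
      rw [hsum, Finset.sum_congr rfl hcong, Finset.sum_ite_eq]
      by_cases hd : d - dj ∈ Finset.range (w.totalDegree + 1)
      · rw [if_pos hd]
      · rw [if_neg hd, homogeneousComponent_eq_zero _ w
          (by simp only [Finset.mem_range] at hd; omega), zero_mul]
    · intro hlt
      rw [hsum]
      exact Finset.sum_eq_zero fun i _ => if_neg (by omega)
  -- the key induction on degree
  have key : ∀ d, ∀ p ∈ invG, p.IsHomogeneous d → p ∈ A := by
    intro d
    induction d using Nat.strong_induction_on with
    | _ d IH =>
    intro p hp hph
    obtain ⟨a, haA, w, hw, hpe⟩ := decomp p hp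
    have hpc : p = homogeneousComponent d p := by
      rw [homogeneousComponent_of_mem ((mem_homogeneousSubmodule _ _).2 hph), if_pos rfl]
    rw [hpc, hpe, map_add, map_sum]
    refine A.add_mem (hAcomp a haA d) (sum_mem fun j _ => ?_)
    obtain ⟨dj, hdjpos, hfj⟩ := hfhom j
    by_cases hle : dj ≤ d
    · rw [(hmulcomp (w j) (f j) dj hfj d).1 hle]
      exact A.mul_mem (IH (d - dj) (by omega) _ (hcinv _ (hw j) _)
        (homogeneousComponent_isHomogeneous _ _)) (hfA j)
    · rw [(hmulcomp (w j) (f j) dj hfj d).2 (by omega)]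
      exact A.zero_mem
  -- conclude
  apply le_antisymm
  · intro p hp
    have hs : (∑ i ∈ Finset.range (p.totalDegree + 1), homogeneousComponent i p) ∈ A :=
      sum_mem fun i _ => key i _ (hcinv p hp i) (homogeneousComponent_isHomogeneous i p)
    rwa [sum_homogeneousComponent] at hs
  · exact hAinv
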